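/- Let X be a normed vector space over ℝ, let Y be a real Hilbert space, let A : X → Y be a bounded linear operator, and let N ≥ 1 and τ > 0. Suppose (i) there exists an N-dimensional subspace S ⊆ Y with sup_{‖f‖ ≤ 1} dist(A f, S) ≤ τ (so that the Kolmogorov N-width of A is at most τ and is attained within τ), and (ii) τ < d_{N-1}(A), the Kolmogorov (N−1)-width of A. Then the numerical τ-rank of A equals N: there exists a bounded linear operator Ã with ‖A − Ã‖ ≤ τ whose range has dimension N, and every bounded linear operator Ã with ‖A − Ã‖ ≤ τ has range of dimension at least N. -/

import Mathlib

/-- The Kolmogorov `N`-width of a bounded linear operator `A : X → Y`: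
the infimum over `N`-dimensional subspaces `S ⊆ Y` of `sup_{‖f‖ ≤ 1} dist(A f, S)`. -/
noncomputable def kolWidth {X Y : Type*} [NormedAddCommGroup X] [NormedSpace ℝ X]
    [NormedAddCommGroup Y] [NormedSpace ℝ Y] (A : X →L[ℝ] Y) (N : ℕ) : ℝ :=
  sInf { r : ℝ | ∃ S : Submodule ℝ Y, FiniteDimensional ℝ S ∧ Module.finrank ℝ S = N ∧
    r = ⨆ f : {f : X // ‖f‖ ≤ 1}, Metric.infDist (A f.1) (S : Set Y) }

/-- Auxiliary: a finite-dimensional subspace of a space of rank at least `k` can be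
enlarged to a subspace of dimension exactly `k`. -/
lemma exists_superset_finrank_eq {Y : Type*} [AddCommGroup Y] [Module ℝ Y]
    (k : ℕ) (hk : (k : Cardinal) ≤ Module.rank ℝ Y) :
    ∀ (n : ℕ) (W : Submodule ℝ Y), FiniteDimensional ℝ W → Module.finrank ℝ W + n = k →
      ∃ S' : Submodule ℝ Y, W ≤ S' ∧ FiniteDimensional ℝ S' ∧ Module.finrank ℝ S' = k := by
  intro n
  induction n with
  | zero =>
    intro W hW hWk
    exact ⟨W, le_rfl, hW, by simpa using hWk⟩
  | succ n ih =>
    intro W hW hWk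
    have hlt : Module.finrank ℝ W < k := by omega
    have hrank : Module.rank ℝ W < Module.rank ℝ Y := by
      have h1 : Module.rank ℝ W = (Module.finrank ℝ W : Cardinal) :=
        (Module.finrank_eq_rank ℝ W).symm
      rw [h1]
      exact lt_of_lt_of_le (by exact_mod_cast hlt) hk
    obtain ⟨m, hm⟩ := Submodule.exists_smul_notMem_of_rank_lt hrank
    have hmW : m ∉ W := by simpa using hm 1 one_ne_zero
    have hm0 : m ≠ 0 := fun h => hmW (h ▸ W.zero_mem)
    set W' : Submodule ℝ Y := W ⊔ (ℝ ∙ m) with hW'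
    have hW'fd : FiniteDimensional ℝ W' := Submodule.finiteDimensional_sup W (ℝ ∙ m)
    have hinf : W ⊓ (ℝ ∙ m) = ⊥ := by
      rw [Submodule.eq_bot_iff]
      rintro x ⟨hxW, hxm⟩
      obtain ⟨r, rfl⟩ := Submodule.mem_span_singleton.mp hxm
      by_contra hne
      have hr : r ≠ 0 := fun h => hne (by simp [h])
      exact hm r hr hxW
    have hfr : Module.finrank ℝ W' = Module.finrank ℝ W + 1 := by
      have := Submodule.finrank_sup_add_finrank_inf_eq W (ℝ ∙ m)
      rw [hinf] at this
      simpa [finrank_span_singleton hm0] using this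
    obtain ⟨S', hle, hfd, hfr'⟩ := ih W' hW'fd (by omega)
    exact ⟨S', le_trans (le_sup_left : W ≤ W') hle, hfd, hfr'⟩

/-- Proposition 3.3 of the paper: if (i) some `N`-dimensional subspace `S ⊆ Y`
satisfies `sup_{‖f‖ ≤ 1} dist(A f, S) ≤ τ`, and (ii) `τ < d_{N-1}(A)`, then the numerical
`τ`-rank of `A` equals `N`: there is `Ã` with `‖A − Ã‖ ≤ τ` whose range has dimension `N`,
and every `Ã` with `‖A − Ã‖ ≤ τ` has range of dimension at least `N`. -/
theorem numericalRank_eq_of_kolWidth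
    {X Y : Type*} [NormedAddCommGroup X] [NormedSpace ℝ X]
    [NormedAddCommGroup Y] [InnerProductSpace ℝ Y] [CompleteSpace Y]
    (A : X →L[ℝ] Y) (N : ℕ) (hN : 1 ≤ N) (τ : ℝ) (hτ : 0 < τ)
    (hi : ∃ S : Submodule ℝ Y, FiniteDimensional ℝ S ∧ Module.finrank ℝ S = N ∧
      (⨆ f : {f : X // ‖f‖ ≤ 1}, Metric.infDist (A f.1) (S : Set Y)) ≤ τ)
    (hii : τ < kolWidth A (N - 1)) :
    (∃ Atil : X →L[ℝ] Y, ‖A - Atil‖ ≤ τ ∧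
        FiniteDimensional ℝ (LinearMap.range (Atil : X →ₗ[ℝ] Y)) ∧
        Module.finrank ℝ (LinearMap.range (Atil : X →ₗ[ℝ] Y)) = N) ∧
      (∀ Atil : X →L[ℝ] Y, ‖A - Atil‖ ≤ τ →
        (N : Cardinal) ≤ Module.rank ℝ (LinearMap.range (Atil : X →ₗ[ℝ] Y))) := by
  obtain ⟨S, hSfd, hSrank, hSsup⟩ := hi
  -- `Y` has rank at least `N`
  have hYrank : (N : Cardinal) ≤ Module.rank ℝ Y := by
    have h1 : Module.rank ℝ S = (N : Cardinal) := by
      rw [← hSrank]; exact (Module.finrank_eq_rank ℝ S).symm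
    calc (N : Cardinal) = Module.rank ℝ S := h1.symm
      _ ≤ Module.rank ℝ Y := Submodule.rank_le S
  -- Part (b): every `Ã` with `‖A - Ã‖ ≤ τ` has range of rank at least `N`.
  have partb : ∀ Atil : X →L[ℝ] Y, ‖A - Atil‖ ≤ τ →
      (N : Cardinal) ≤ Module.rank ℝ (LinearMap.range (Atil : X →ₗ[ℝ] Y)) := by
    intro Atil hAtil
    by_contra hcon
    push_neg at hcon
    set R := LinearMap.range (Atil : X →ₗ[ℝ] Y) with hR
    -- the range is finite dimensional of dimension at most `N - 1`
    have hRlt : Module.rank ℝ R < Cardinal.aleph0 :=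
      lt_of_lt_of_le hcon (Cardinal.nat_lt_aleph0 N).le
    have hRfd : FiniteDimensional ℝ R := by
      haveI : Module.Free ℝ R := Module.Free.of_divisionRing ℝ R
      rw [show FiniteDimensional ℝ R = Module.Finite ℝ R from rfl, ← Module.rank_lt_aleph0_iff]
      exact hRlt
    have hRfin : Module.finrank ℝ R < N := by
      have := Module.finrank_eq_rank ℝ R
      rw [← this] at hcon
      exact_mod_cast hcon
    -- enlarge to a subspace of dimension exactly `N - 1`
    have hk : ((N - 1 : ℕ) : Cardinal) ≤ Module.rank ℝ Y :=
      le_trans (by exact_mod_cast Nat.sub_le N 1) hYrank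
    obtain ⟨S', hle, hS'fd, hS'rank⟩ :=
      exists_superset_finrank_eq (N - 1) hk (N - 1 - Module.finrank ℝ R) R hRfd (by omega)
    -- every `A f` with `‖f‖ ≤ 1` is within `τ` of `S'`
    have hdist : ∀ f : {f : X // ‖f‖ ≤ 1},
        Metric.infDist (A f.1) (S' : Set Y) ≤ τ := by
      intro f
      have hmem : Atil f.1 ∈ (S' : Set Y) := hle ⟨f.1, rfl⟩
      calc Metric.infDist (A f.1) (S' : Set Y) ≤ dist (A f.1) (Atil f.1) :=
            Metric.infDist_le_dist_of_mem hmem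
        _ = ‖(A - Atil) f.1‖ := by rw [dist_eq_norm]; simp
        _ ≤ ‖A - Atil‖ * ‖f.1‖ := (A - Atil).le_opNorm f.1
        _ ≤ τ * 1 := by
            apply mul_le_mul hAtil f.2 (norm_nonneg _) hτ.le
        _ = τ := mul_one τ
    have hne : Nonempty {f : X // ‖f‖ ≤ 1} := ⟨⟨0, by simp⟩⟩
    have hsup : (⨆ f : {f : X // ‖f‖ ≤ 1}, Metric.infDist (A f.1) (S' : Set Y)) ≤ τ :=
      ciSup_le hdist
    -- hence the Kolmogorov `(N-1)`-width is at most `τ`, a contradiction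
    have hmem : (⨆ f : {f : X // ‖f‖ ≤ 1}, Metric.infDist (A f.1) (S' : Set Y)) ∈
        { r : ℝ | ∃ S : Submodule ℝ Y, FiniteDimensional ℝ S ∧
          Module.finrank ℝ S = (N - 1 : ℕ) ∧
          r = ⨆ f : {f : X // ‖f‖ ≤ 1}, Metric.infDist (A f.1) (S : Set Y) } :=
      ⟨S', hS'fd, hS'rank, rfl⟩
    have hbdd : BddBelow { r : ℝ | ∃ S : Submodule ℝ Y, FiniteDimensional ℝ S ∧
        Module.finrank ℝ S = (N - 1 : ℕ) ∧
        r = ⨆ f : {f : X // ‖f‖ ≤ 1}, Metric.infDist (A f.1) (S : Set Y) } := by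
      refine ⟨0, ?_⟩
      rintro r ⟨T, _, _, rfl⟩
      exact Real.iSup_nonneg fun f => Metric.infDist_nonneg
    have : kolWidth A (N - 1) ≤ τ :=
      le_trans (csInf_le hbdd hmem) hsup
    exact absurd hii (not_lt.mpr this)
  refine ⟨?_, partb⟩
  -- Part (a): construct `Ã` via the orthogonal projection onto `S`.
  haveI : S.HasOrthogonalProjection := Submodule.HasOrthogonalProjection.ofCompleteSpace S
  set P : Y →L[ℝ] Y := S.subtypeL.comp (Submodule.orthogonalProjectionOnto S) with hP
  set Atil : X →L[ℝ] Y := P.comp A with hAtildef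
  have hrangeS : LinearMap.range (Atil : X →ₗ[ℝ] Y) ≤ S := by
    rintro y ⟨x, rfl⟩
    exact (Submodule.orthogonalProjectionOnto S (A x)).2
  -- pointwise bound: `‖A f - Ã f‖` equals the distance of `A f` to `S`
  have hpoint : ∀ y : Y, ‖y - P y‖ = Metric.infDist y (S : Set Y) := by
    intro y
    have h1 : ‖y - P y‖ = ⨅ x : S, ‖y - x‖ := Submodule.starProjection_minimal (U := S) y
    rw [h1, Metric.infDist_eq_iInf]
    congr 1
    ext x
    rw [dist_eq_norm]
  -- each point in the unit ball is within `τ`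
  have hbddAbove : BddAbove (Set.range fun f : {f : X // ‖f‖ ≤ 1} =>
      Metric.infDist (A f.1) (S : Set Y)) := by
    refine ⟨‖A‖, ?_⟩
    rintro r ⟨f, rfl⟩
    calc Metric.infDist (A f.1) (S : Set Y) ≤ dist (A f.1) 0 :=
          Metric.infDist_le_dist_of_mem S.zero_mem
      _ = ‖A f.1‖ := by simp
      _ ≤ ‖A‖ * ‖f.1‖ := A.le_opNorm f.1
      _ ≤ ‖A‖ * 1 := by
          exact mul_le_mul_of_nonneg_left f.2 (norm_nonneg A)
      _ = ‖A‖ := mul_one _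
  have hball : ∀ f : X, ‖f‖ ≤ 1 → ‖A f - Atil f‖ ≤ τ := by
    intro f hf
    have h1 : ‖A f - Atil f‖ = Metric.infDist (A f) (S : Set Y) := hpoint (A f)
    rw [h1]
    calc Metric.infDist (A f) (S : Set Y)
        ≤ ⨆ g : {g : X // ‖g‖ ≤ 1}, Metric.infDist (A g.1) (S : Set Y) :=
          le_ciSup hbddAbove ⟨f, hf⟩
      _ ≤ τ := hSsup
  have hnorm : ‖A - Atil‖ ≤ τ := by
    apply ContinuousLinearMap.opNorm_le_bound _ hτ.le
    intro x
    rcases eq_or_ne x 0 with rfl | hx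
    · simp
    · have hxn : (0 : ℝ) < ‖x‖ := norm_pos_iff.mpr hx
      set u : X := ‖x‖⁻¹ • x with hu
      have hun : ‖u‖ = 1 := by
        rw [hu, norm_smul, norm_inv, norm_norm, inv_mul_cancel₀ hxn.ne']
      have hxu : x = ‖x‖ • u := by
        rw [hu, smul_smul, mul_inv_cancel₀ hxn.ne', one_smul]
      calc ‖(A - Atil) x‖ = ‖(A - Atil) (‖x‖ • u)‖ := by rw [← hxu]
        _ = ‖x‖ * ‖(A - Atil) u‖ := by rw [map_smul, norm_smul, norm_norm]
        _ = ‖x‖ * ‖A u - Atil u‖ := by simp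
        _ ≤ ‖x‖ * τ := mul_le_mul_of_nonneg_left (hball u hun.le) hxn.le
        _ = τ * ‖x‖ := mul_comm _ _
  have hfd : FiniteDimensional ℝ (LinearMap.range (Atil : X →ₗ[ℝ] Y)) :=
    Submodule.finiteDimensional_of_le hrangeS
  have hle : Module.finrank ℝ (LinearMap.range (Atil : X →ₗ[ℝ] Y)) ≤ N := by
    rw [← hSrank]
    exact Submodule.finrank_mono hrangeS
  have hge : N ≤ Module.finrank ℝ (LinearMap.range (Atil : X →ₗ[ℝ] Y)) := by
    have := partb Atil hnorm
    rw [← Module.finrank_eq_rank ℝ (LinearMap.range (Atil : X →ₗ[ℝ] Y))] at this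
    exact_mod_cast this
  exact ⟨Atil, hnorm, hfd, le_antisymm hle hge⟩
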